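/- Let E be a normed space and let (Aₙ)ₙ∈ℕ be a sequence of unbounded subsets of E. Then there exist points aₙ ∈ Aₙ and norm-one functionals χₙ ∈ E' such that |χₙ(aᵢ)| > 1 for all 1 ≤ i ≤ n. -/

import Mathlib

open Filter Topology Set

set_option synthInstance.maxHeartbeats 1000000
set_option maxHeartbeats 1000000

lemma my_unbdd {E : Type*} [NormedAddCommGroup E] {B : Set E}
    (hB : ¬ Bornology.IsBounded B) (r : ℝ) : ∃ b ∈ B, r < ‖b‖ := by
  rw [isBounded_iff_forall_norm_le] at hB
  push_neg at hB
  obtain ⟨b, hb, hr⟩ := hB r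
  exact ⟨b, hb, hr⟩

lemma my_step {E : Type*} [NormedAddCommGroup E] [NormedSpace ℝ E] {n : ℕ}
    (a : Fin n → E) (χ : E →L[ℝ] ℝ) (hχ : ‖χ‖ = 1) (h : ∀ i, 1 < |χ (a i)|)
    {B : Set E} (hB : ¬ Bornology.IsBounded B) :
    ∃ b ∈ B, ∃ χ' : E →L[ℝ] ℝ, ‖χ'‖ = 1 ∧ (∀ i, 1 < |χ' (a i)|) ∧ 1 < |χ' b| := by
  obtain ⟨ε, hε1, hε0⟩ : ∃ ε : ℝ, (∀ i, 1 + ε * (1 + ‖a i‖) < |χ (a i)|) ∧ ε ∈ Ioi (0:ℝ) := by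
    have hev : ∀ᶠ ε in 𝓝[>] (0:ℝ), ∀ i, 1 + ε * (1 + ‖a i‖) < |χ (a i)| := by
      rw [eventually_all]
      intro i
      have ht : Tendsto (fun ε : ℝ => 1 + ε * (1 + ‖a i‖)) (𝓝[>] 0) (𝓝 1) := by
        have h2 : Tendsto (fun ε : ℝ => 1 + ε * (1 + ‖a i‖)) (𝓝 0) (𝓝 (1 + 0 * (1 + ‖a i‖))) :=
          tendsto_const_nhds.add (tendsto_id.mul tendsto_const_nhds)
        simpa using h2.mono_left nhdsWithin_le_nhds
      exact ht.eventually_lt_const (h i)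
    exact (hev.and self_mem_nhdsWithin).exists
  simp only [mem_Ioi] at hε0
  obtain ⟨b, hbB, hb⟩ := my_unbdd hB ((1 + ε) / ε)
  have hbpos : 0 < ‖b‖ := lt_trans (by positivity) hb
  have hb0 : b ≠ 0 := by simpa using hbpos.ne'
  obtain ⟨ψ, hψ, hψb⟩ := exists_dual_vector ℝ b (norm_ne_zero_iff.mpr hb0)
  set t : ℝ := if 0 ≤ χ b then ε else -ε with ht_def
  have habs : |t| = ε := by
    rcases le_or_gt 0 (χ b) with h' | h'
    · simp [ht_def, h', abs_of_pos hε0]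
    · simp [ht_def, not_le.mpr h', abs_of_pos hε0]
  set g : E →L[ℝ] ℝ := χ + t • ψ with hg_def
  have hεb : 1 + ε < ε * ‖b‖ := by
    rw [div_lt_iff₀ hε0] at hb
    linarith [hb]
  have hgb : 1 + ε < |g b| := by
    have hgbe : g b = χ b + t * ‖b‖ := by
      simp [hg_def, hψb]
    rw [hgbe]
    rcases le_or_gt 0 (χ b) with h' | h'
    · have : t = ε := by simp [ht_def, h']
      rw [this, abs_of_nonneg (by positivity)]
      nlinarith
    · have : t = -ε := by simp [ht_def, not_le.mpr h']
      rw [this, abs_of_nonpos (by nlinarith)]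
      nlinarith
  have hga : ∀ i, 1 + ε < |g (a i)| := by
    intro i
    have h1 : |(t • ψ) (a i)| ≤ ε * ‖a i‖ := by
      have := ψ.le_opNorm (a i)
      rw [hψ, one_mul] at this
      calc |(t • ψ) (a i)| = |t| * |ψ (a i)| := by simp [abs_mul]
        _ ≤ ε * ‖a i‖ := by rw [habs]; exact mul_le_mul_of_nonneg_left (by simpa using this) hε0.le
    have h2 : |χ (a i)| ≤ |g (a i)| + |(t • ψ) (a i)| := by
      have : χ (a i) = g (a i) - (t • ψ) (a i) := by simp [hg_def]
      rw [this]
      exact abs_sub _ _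
    have := hε1 i
    nlinarith
  have hts : ‖t • ψ‖ = ε := by
    rw [norm_smul t ψ, hψ, Real.norm_eq_abs, habs, mul_one]
  have hgn : ‖g‖ ≤ 1 + ε := by
    calc ‖g‖ ≤ ‖χ‖ + ‖t • ψ‖ := norm_add_le _ _
      _ = 1 + ε := by rw [hχ, hts]
  have hg0 : g ≠ 0 := by
    intro h0
    rw [h0] at hgb
    simp at hgb
    linarith
  have hgpos : 0 < ‖g‖ := norm_pos_iff.mpr hg0
  refine ⟨b, hbB, ‖g‖⁻¹ • g, ?_, ?_, ?_⟩
  · rw [norm_smul ‖g‖⁻¹ g, Real.norm_eq_abs, abs_inv, abs_of_pos hgpos, inv_mul_cancel₀ hgpos.ne']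
  · intro i
    have : |((‖g‖⁻¹ • g) : E →L[ℝ] ℝ) (a i)| = |g (a i)| / ‖g‖ := by
      simp [abs_mul, abs_of_pos hgpos, div_eq_inv_mul]
    rw [this, lt_div_iff₀ hgpos, one_mul]
    exact lt_of_le_of_lt hgn (hga i)
  · have : |((‖g‖⁻¹ • g) : E →L[ℝ] ℝ) b| = |g b| / ‖g‖ := by
      simp [abs_mul, abs_of_pos hgpos, div_eq_inv_mul]
    rw [this, lt_div_iff₀ hgpos, one_mul]
    exact lt_of_le_of_lt hgn hgb

def myQ {E : Type*} [NormedAddCommGroup E] [NormedSpace ℝ E]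
    (A : ℕ → Set E) (n : ℕ) (p : (Fin (n+1) → E) × (E →L[ℝ] ℝ)) : Prop :=
  (∀ i : Fin (n+1), p.1 i ∈ A i) ∧ ‖p.2‖ = 1 ∧ ∀ i, 1 < |p.2 (p.1 i)|

lemma my_base {E : Type*} [NormedAddCommGroup E] [NormedSpace ℝ E]
    (A : ℕ → Set E) (hA : ∀ n, ¬ Bornology.IsBounded (A n)) :
    ∃ p : (Fin 1 → E) × (E →L[ℝ] ℝ), myQ A 0 p := by
  obtain ⟨b, hbA, hb⟩ := my_unbdd (hA 0) 1
  have hb0 : b ≠ 0 := by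
    intro h0; rw [h0] at hb; simp at hb; linarith
  obtain ⟨ψ, hψ, hψb⟩ := exists_dual_vector ℝ b (norm_ne_zero_iff.mpr hb0)
  refine ⟨((fun _ => b), ψ), fun i => ?_, hψ, fun i => ?_⟩
  · have : (i : ℕ) = 0 := by omega
    simpa [this] using hbA
  · simp only [hψb]
    simpa [abs_of_nonneg (norm_nonneg b)] using hb

lemma my_ext {E : Type*} [NormedAddCommGroup E] [NormedSpace ℝ E]
    {A : ℕ → Set E} (hA : ∀ n, ¬ Bornology.IsBounded (A n)) {n : ℕ}
    (p : (Fin (n+1) → E) × (E →L[ℝ] ℝ)) (hp : myQ A n p) :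
    ∃ q : (Fin (n+2) → E) × (E →L[ℝ] ℝ), myQ A (n+1) q ∧
      ∀ j : Fin (n+1), q.1 j.castSucc = p.1 j := by
  obtain ⟨b, hbA, χ', hχ', hold, hnew⟩ := my_step p.1 p.2 hp.2.1 hp.2.2 (hA (n+1))
  refine ⟨(Fin.snoc p.1 b, χ'), ⟨?_, hχ', ?_⟩, fun j => by simp⟩
  · intro i
    refine Fin.lastCases ?_ ?_ i
    · simpa using hbA
    · intro j; simpa using hp.1 j
  · intro i
    refine Fin.lastCases ?_ ?_ i
    · simpa using hnew
    · intro j; simpa using hold j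

noncomputable def mySeq {E : Type*} [NormedAddCommGroup E] [NormedSpace ℝ E]
    (A : ℕ → Set E) (hA : ∀ n, ¬ Bornology.IsBounded (A n)) :
    ∀ n : ℕ, {p : (Fin (n+1) → E) × (E →L[ℝ] ℝ) // myQ A n p}
  | 0 => ⟨(my_base A hA).choose, (my_base A hA).choose_spec⟩
  | (n+1) =>
    ⟨(my_ext hA (mySeq A hA n).1 (mySeq A hA n).2).choose,
     (my_ext hA (mySeq A hA n).1 (mySeq A hA n).2).choose_spec.1⟩

lemma mySeq_compat {E : Type*} [NormedAddCommGroup E] [NormedSpace ℝ E]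
    (A : ℕ → Set E) (hA : ∀ n, ¬ Bornology.IsBounded (A n)) (n : ℕ) (j : Fin (n+1)) :
    ((mySeq A hA (n+1)).1).1 j.castSucc = ((mySeq A hA n).1).1 j :=
  (my_ext hA (mySeq A hA n).1 (mySeq A hA n).2).choose_spec.2 j

/-- The inductive construction in the proof of Lemma 3.1: for a sequence of unbounded subsets
`Aₙ` of a normed space `E` there are points `aₙ ∈ Aₙ` and norm-one functionals `χₙ` with
`|χₙ(aᵢ)| > 1` for all `i ≤ n`. -/
theorem exists_points_and_norm_one_functionals
    {E : Type*} [NormedAddCommGroup E] [NormedSpace ℝ E]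
    (A : ℕ → Set E) (hA : ∀ n, ¬ Bornology.IsBounded (A n)) :
    ∃ (a : ℕ → E) (χ : ℕ → (E →L[ℝ] ℝ)),
      (∀ n, a n ∈ A n) ∧ (∀ n, ‖χ n‖ = 1) ∧
      ∀ i n : ℕ, i ≤ n → 1 < |χ n (a i)| := by
  set f := mySeq A hA with hf
  refine ⟨fun n => (f n).1.1 (Fin.last n), fun n => (f n).1.2, ?_, ?_, ?_⟩
  · intro n
    simpa using (f n).2.1 (Fin.last n)
  · intro n
    exact (f n).2.2.1
  · have key : ∀ n i (h : i ≤ n), (f n).1.1 ⟨i, by omega⟩ = (f i).1.1 (Fin.last i) := by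
      intro n
      induction n with
      | zero =>
        intro i hi
        have : i = 0 := by omega
        subst this; rfl
      | succ n ih =>
        intro i hi
        rcases Nat.lt_or_ge i (n+1) with h' | h'
        · have hle : i ≤ n := by omega
          have : (⟨i, by omega⟩ : Fin (n+2)) = (⟨i, by omega⟩ : Fin (n+1)).castSucc := rfl
          rw [this, mySeq_compat A hA n ⟨i, by omega⟩]
          exact ih i hle
        · have : i = n+1 := by omega
          subst this; rfl
    intro i n hin
    have := (f n).2.2.2 ⟨i, by omega⟩
    rwa [key n i hin] at this
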